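/- Let f : (0,∞) → ℝ be concave with sign(f(x)) = sign(x−1), and suppose x ↦ f(1/x) is integrable over (0,1]. For fixed q ∈ (0,1), the function x ↦ F(x,q) := ∑_{k=0}^∞ q^k f(q^{−k} x) has a unique zero on (0,∞), and this zero lies in the open interval (0,1). -/

import Mathlib

open MeasureTheory

/-- For fixed `q ∈ (0,1)`, `x ↦ F(x,q) = ∑_{k=0}^∞ q^k f(q^{-k} x)` has a unique
zero on `(0,∞)`, and this zero lies in `(0,1)`. -/
theorem stmt_9 (f : ℝ → ℝ) (hconc : ConcaveOn ℝ (Set.Ioi 0) f)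
    (hneg : ∀ x : ℝ, 0 < x → x < 1 → f x < 0)
    (hone : f 1 = 0)
    (hposf : ∀ x : ℝ, 1 < x → 0 < f x)
    (hint : IntegrableOn (fun t => f (1 / t)) (Set.Ioc 0 1))
    (q : ℝ) (hq0 : 0 < q) (hq1 : q < 1) :
    ∃ x₀ : ℝ, x₀ ∈ Set.Ioo (0:ℝ) 1 ∧
      (∑' k : ℕ, q ^ k * f (x₀ / q ^ k)) = 0 ∧
      ∀ x : ℝ, 0 < x → (∑' k : ℕ, q ^ k * f (x / q ^ k)) = 0 → x = x₀ := by
  -- f is nondecreasing on (0,∞)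
  have hmono : ∀ a b : ℝ, 0 < a → a ≤ b → f a ≤ f b := by
    intro a b ha hab
    rcases eq_or_lt_of_le hab with rfl | hab'
    · exact le_refl _
    by_contra hlt
    push_neg at hlt
    -- f b < f a
    set c : ℝ := max (b + 1) (max 2 (b + f b * (b - a) / (f a - f b) + 1)) with hc
    have hbc : b < c := lt_of_lt_of_le (by linarith) (le_max_left _ _)
    have hc2 : (2:ℝ) ≤ c := le_trans (le_max_left _ _) (le_max_right _ _)
    have hcb : b + f b * (b - a) / (f a - f b) + 1 ≤ c :=
      le_trans (le_max_right _ _) (le_max_right _ _)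
    have hac : a < c := lt_trans hab' hbc
    have hca : (0:ℝ) < c - a := by linarith
    have hfc : 0 < f c := hposf c (by linarith)
    have key := hconc.2 (Set.mem_Ioi.2 ha) (Set.mem_Ioi.2 (show (0:ℝ) < c by linarith))
      (show (0:ℝ) ≤ (c - b) / (c - a) from div_nonneg (by linarith) (by linarith))
      (show (0:ℝ) ≤ (b - a) / (c - a) from div_nonneg (by linarith) (by linarith))
      (show (c - b) / (c - a) + (b - a) / (c - a) = 1 by field_simp; ring)
    simp only [smul_eq_mul] at key
    have harg : (c - b) / (c - a) * a + (b - a) / (c - a) * c = b := by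
      field_simp; ring
    rw [harg] at key
    -- multiply through by (c - a) > 0
    have key2 : (c - b) * f a + (b - a) * f c ≤ (c - a) * f b := by
      have := mul_le_mul_of_nonneg_left key hca.le
      calc (c - b) * f a + (b - a) * f c
          = (c - a) * ((c - b) / (c - a) * f a + (b - a) / (c - a) * f c) := by
            field_simp
        _ ≤ (c - a) * f b := this
    -- (c - b)(f a - f b) ≥ f b (b - a) + (f a - f b)
    have hcb' : (c - b) * (f a - f b) ≥ f b * (b - a) + (f a - f b) := by
      have h1 : f b * (b - a) / (f a - f b) + 1 ≤ c - b := by linarith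
      have h2 := mul_le_mul_of_nonneg_right h1 (show (0:ℝ) ≤ f a - f b by linarith)
      calc f b * (b - a) + (f a - f b)
          = (f b * (b - a) / (f a - f b) + 1) * (f a - f b) := by
            have hne : f a - f b ≠ 0 := ne_of_gt (by linarith)
            field_simp
        _ ≤ (c - b) * (f a - f b) := h2
    nlinarith [mul_pos (show (0:ℝ) < b - a by linarith) hfc]
  have hq1' : (0:ℝ) < 1 - q := by linarith
  have hqk : ∀ k : ℕ, (0:ℝ) < q ^ k := fun k => pow_pos hq0 k
  -- f is nonnegative at points ≥ 1
  have hfnn : ∀ y : ℝ, 1 ≤ y → 0 ≤ f y := fun y hy => hone ▸ hmono 1 y one_pos hy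
  -- Summability of the defining series
  have hsum : ∀ x : ℝ, 0 < x → Summable (fun k : ℕ => q ^ k * f (x / q ^ k)) := by
    intro x hx
    obtain ⟨K, hKx⟩ := exists_pow_lt_of_lt_one hx hq1
    rw [← summable_nat_add_iff (f := fun k : ℕ => q ^ k * f (x / q ^ k)) K]
    set u : ℕ → ℝ := fun k => q ^ (k + K) / x with hu
    have hupos : ∀ k, 0 < u k := fun k => div_pos (hqk _) hx
    have hult : ∀ k, u k < 1 := by
      intro k
      have : q ^ (k + K) ≤ q ^ K := pow_le_pow_of_le_one hq0.le hq1.le (by omega)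
      exact (div_lt_one hx).2 (lt_of_le_of_lt this hKx)
    have huanti : ∀ i j : ℕ, i ≤ j → u j ≤ u i := by
      intro i j hij
      simp only [hu]
      exact (div_le_div_iff_of_pos_right hx).2 (pow_le_pow_of_le_one hq0.le hq1.le (by omega))
    set s : ℕ → Set ℝ := fun k => Set.Ioc (u (k + 1)) (u k) with hs
    have hm : ∀ k, MeasurableSet (s k) := fun k => measurableSet_Ioc
    have hsub : ∀ k, s k ⊆ Set.Ioc 0 1 := by
      intro k t ht
      exact ⟨lt_of_lt_of_le (hupos (k + 1)) ht.1.le, ht.2.trans (hult k).le⟩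
    have hd : Pairwise (Function.onFun Disjoint s) := by
      intro i j hij
      rcases lt_or_gt_of_ne hij with h | h
      · simp only [hs, Function.onFun]
        rw [Set.Ioc_disjoint_Ioc]
        exact le_trans (min_le_right _ _) (le_trans (huanti (i+1) j h) (le_max_left _ _))
      · simp only [hs, Function.onFun]
        rw [Set.Ioc_disjoint_Ioc]
        exact le_trans (min_le_left _ _) (le_trans (huanti (j+1) i h) (le_max_right _ _))
    have hintU : IntegrableOn (fun t => f (1 / t)) (⋃ k, s k) :=
      hint.mono_set (Set.iUnion_subset hsub)
    have hS : Summable (fun k => ∫ t in s k, f (1 / t)) :=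
      (hasSum_integral_iUnion hm hd hintU).summable
    -- key pointwise bound
    have hbound : ∀ n : ℕ, q ^ (n + K) * f (x / q ^ (n + K))
        ≤ (x / (1 - q)) * ∫ t in s n, f (1 / t) := by
      intro n
      have hinv : x / q ^ (n + K) = 1 / u n := by
        simp only [hu]
        rw [one_div_div]
      have hconst : f (1 / u n) * (u n - u (n + 1)) ≤ ∫ t in s n, f (1 / t) := by
        have hIn : IntegrableOn (fun t => f (1 / t)) (s n) := hint.mono_set (hsub n)
        have h1 : ∫ t in s n, f (1 / u n) ≤ ∫ t in s n, f (1 / t) := by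
          refine setIntegral_mono_on (integrableOn_const (ne_of_lt ?_)) hIn (hm n) ?_
          · rw [hs]; simp only [Real.volume_Ioc]; exact ENNReal.ofReal_lt_top
          · intro t ht
            refine hmono (1 / u n) (1 / t) (by positivity) ?_
            exact one_div_le_one_div_of_le (lt_of_lt_of_le (hupos (n+1)) ht.1.le) ht.2
        have h2 : ∫ t in s n, f (1 / u n) = f (1 / u n) * (u n - u (n + 1)) := by
          rw [setIntegral_const, hs, Real.volume_real_Ioc, smul_eq_mul,
            max_eq_left (by linarith [huanti n (n+1) (by omega)])]
          ring
        linarith [h1, h2.symm.le]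
      have hdiff : u n - u (n + 1) = u n * (1 - q) := by
        have h1 : q ^ (n + 1 + K) = q ^ (n + K) * q := by
          rw [show n + 1 + K = (n + K) + 1 from by omega, pow_succ]
        simp only [hu, h1]
        field_simp
      have hfn : 0 ≤ f (1 / u n) := hfnn _ (one_le_one_div (hupos n) (hult n).le)
      have hqnK : q ^ (n + K) = x * u n := by
        simp only [hu]
        field_simp
      rw [hinv, hqnK]
      have := mul_le_mul_of_nonneg_left hconst (show (0:ℝ) ≤ x / (1 - q) by positivity)
      calc x * u n * f (1 / u n)
          = x / (1 - q) * (f (1 / u n) * (u n - u (n + 1))) := by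
            rw [hdiff]; field_simp
        _ ≤ x / (1 - q) * ∫ t in s n, f (1 / t) := this
    refine Summable.of_nonneg_of_le ?_ hbound (hS.mul_left _)
    intro n
    have : 1 ≤ x / q ^ (n + K) := by
      rw [le_div_iff₀ (hqk _), one_mul]
      calc q ^ (n + K) ≤ q ^ K := pow_le_pow_of_le_one hq0.le hq1.le (by omega)
        _ ≤ x := hKx.le
    exact mul_nonneg (hqk _).le (hfnn _ this)
  -- The function F
  set F : ℝ → ℝ := fun x => ∑' k : ℕ, q ^ k * f (x / q ^ k) with hF
  -- F is monotone
  have hFmono : ∀ x y : ℝ, 0 < x → x ≤ y → F x ≤ F y := by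
    intro x y hx hxy
    refine Summable.tsum_le_tsum ?_ (hsum x hx) (hsum y (lt_of_lt_of_le hx hxy))
    intro k
    exact mul_le_mul_of_nonneg_left
      (hmono _ _ (by positivity) ((div_le_div_iff_of_pos_right (hqk k)).2 hxy)) (hqk k).le
  -- F 1 > 0
  have hF1 : 0 < F 1 := by
    refine Summable.tsum_pos (hsum 1 one_pos) ?_ 1 ?_
    · intro k
      refine mul_nonneg (hqk k).le (hfnn _ ?_)
      rw [le_div_iff₀ (hqk k), one_mul]
      exact pow_le_one₀ hq0.le hq1.le
    · have h1q : 1 < 1 / q ^ 1 := by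
        rw [lt_div_iff₀ (hqk 1), one_mul, pow_one]; exact hq1
      exact mul_pos (hqk 1) (hposf _ h1q)
  -- functional equation
  have hFeq : ∀ x : ℝ, 0 < x → F (q * x) = f (q * x) + q * F x := by
    intro x hx
    have h := Summable.tsum_eq_zero_add (hsum (q * x) (mul_pos hq0 hx))
    have hterm : ∀ k : ℕ, q ^ (k + 1) * f (q * x / q ^ (k + 1))
        = q * (q ^ k * f (x / q ^ k)) := by
      intro k
      have harg : q * x / q ^ (k + 1) = x / q ^ k := by
        rw [pow_succ']
        exact mul_div_mul_left x (q ^ k) hq0.ne'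
      rw [harg, pow_succ']; ring
    calc F (q * x) = q ^ 0 * f (q * x / q ^ 0) + ∑' k : ℕ, q ^ (k + 1) * f (q * x / q ^ (k + 1)) := h
      _ = f (q * x) + ∑' k : ℕ, q * (q ^ k * f (x / q ^ k)) := by
          rw [pow_zero, one_mul, div_one, tsum_congr hterm]
      _ = f (q * x) + q * F x := by rw [tsum_mul_left]
  -- F is concave on (0,∞)
  have hFconc : ConcaveOn ℝ (Set.Ioi 0) F := by
    refine ⟨convex_Ioi 0, ?_⟩
    intro x hx y hy a b ha hb hab
    simp only [smul_eq_mul]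
    rw [Set.mem_Ioi] at hx hy
    have hxy : 0 < a * x + b * y := by
      rcases lt_or_eq_of_le ha with ha' | ha'
      · nlinarith [mul_nonneg hb hy.le]
      · have hb1 : b = 1 := by linarith
        rw [← ha', hb1]; simpa using hy
    have hterm : ∀ k : ℕ, a * (q ^ k * f (x / q ^ k)) + b * (q ^ k * f (y / q ^ k))
        ≤ q ^ k * f ((a * x + b * y) / q ^ k) := by
      intro k
      have h := hconc.2 (Set.mem_Ioi.2 (show (0:ℝ) < x / q ^ k by positivity))
        (Set.mem_Ioi.2 (show (0:ℝ) < y / q ^ k by positivity)) ha hb hab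
      simp only [smul_eq_mul] at h
      have harg : a * (x / q ^ k) + b * (y / q ^ k) = (a * x + b * y) / q ^ k := by
        field_simp
      rw [harg] at h
      calc a * (q ^ k * f (x / q ^ k)) + b * (q ^ k * f (y / q ^ k))
          = q ^ k * (a * f (x / q ^ k) + b * f (y / q ^ k)) := by ring
        _ ≤ q ^ k * f ((a * x + b * y) / q ^ k) :=
          mul_le_mul_of_nonneg_left h (hqk k).le
    have hsumL : Summable (fun k : ℕ =>
        a * (q ^ k * f (x / q ^ k)) + b * (q ^ k * f (y / q ^ k))) :=
      ((hsum x hx).mul_left a).add ((hsum y hy).mul_left b)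
    calc a * F x + b * F y
        = ∑' k : ℕ, (a * (q ^ k * f (x / q ^ k)) + b * (q ^ k * f (y / q ^ k))) := by
          rw [Summable.tsum_add ((hsum x hx).mul_left a) ((hsum y hy).mul_left b),
            tsum_mul_left, tsum_mul_left]
      _ ≤ ∑' k : ℕ, q ^ k * f ((a * x + b * y) / q ^ k) :=
          Summable.tsum_le_tsum hterm hsumL (hsum _ hxy)
      _ = F (a * x + b * y) := rfl
  have hFcont : ContinuousOn F (Set.Ioi 0) := hFconc.continuousOn isOpen_Ioi
  -- F is negative at some small point
  have hfq : f q < 0 := hneg q hq0 hq1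
  have hclaim : ∀ n : ℕ, F (q ^ (n + 1)) ≤ f q + q ^ (n + 1) * F 1 := by
    intro n
    induction n with
    | zero =>
      have h0 := hFeq 1 one_pos
      rw [mul_one] at h0
      simp only [zero_add, pow_one]
      rw [h0]
    | succ n ih =>
      have h1 : F (q ^ (n + 2)) = f (q ^ (n + 2)) + q * F (q ^ (n + 1)) := by
        have := hFeq (q ^ (n + 1)) (hqk (n + 1))
        rw [← pow_succ'] at this
        exact this
      have h2 : f (q ^ (n + 2)) ≤ f q := by
        refine hmono _ _ (hqk (n + 2)) ?_
        calc q ^ (n + 2) ≤ q ^ 1 := pow_le_pow_of_le_one hq0.le hq1.le (by omega)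
          _ = q := pow_one q
      have h3 : q * F (q ^ (n + 1)) ≤ q * (f q + q ^ (n + 1) * F 1) :=
        mul_le_mul_of_nonneg_left ih hq0.le
      have h4 : q * f q ≤ 0 := mul_nonpos_of_nonneg_of_nonpos hq0.le hfq.le
      calc F (q ^ (n + 2)) = f (q ^ (n + 2)) + q * F (q ^ (n + 1)) := h1
        _ ≤ f q + q * (f q + q ^ (n + 1) * F 1) := by linarith
        _ = f q + q * f q + q ^ (n + 2) * F 1 := by ring
        _ ≤ f q + q ^ (n + 2) * F 1 := by linarith
  obtain ⟨n, hn⟩ := exists_pow_lt_of_lt_one (show (0:ℝ) < -f q / F 1 from div_pos (by linarith) hF1) hq1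
  have hnn : q ^ (n + 1) * F 1 < -f q := by
    have h1 : q ^ (n + 1) ≤ q ^ n := pow_le_pow_of_le_one hq0.le hq1.le (by omega)
    have h2 : q ^ (n + 1) < -f q / F 1 := lt_of_le_of_lt h1 hn
    calc q ^ (n + 1) * F 1 < (-f q / F 1) * F 1 := by
          exact mul_lt_mul_of_pos_right h2 hF1
      _ = -f q := by field_simp
  set a : ℝ := q ^ (n + 1) with hadef
  have ha0 : 0 < a := hqk (n + 1)
  have ha1 : a < 1 := pow_lt_one₀ hq0.le hq1 (by omega)
  have hFa : F a < 0 := by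
    have := hclaim n
    linarith
  -- IVT
  have hIcc : Set.Icc a 1 ⊆ Set.Ioi 0 := fun t ht => lt_of_lt_of_le ha0 ht.1
  have hivt := intermediate_value_Ioo ha1.le (hFcont.mono hIcc)
  obtain ⟨x₀, hx₀mem, hFx₀⟩ := hivt (show (0:ℝ) ∈ Set.Ioo (F a) (F 1) from ⟨hFa, hF1⟩)
  have hx₀0 : 0 < x₀ := lt_trans ha0 hx₀mem.1
  have hx₀1 : x₀ < 1 := hx₀mem.2
  -- uniqueness helper: no two distinct zeros below 1
  have huniq : ∀ u v : ℝ, 0 < u → u < v → v < 1 → F u = 0 → F v = 0 → False := by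
    intro u v hu huv hv1 hFu hFv
    have h1v : (0:ℝ) < 1 - u := by linarith
    have key := hFconc.2 (Set.mem_Ioi.2 hu) (Set.mem_Ioi.2 one_pos)
      (show (0:ℝ) ≤ (1 - v) / (1 - u) from div_nonneg (by linarith) (by linarith))
      (show (0:ℝ) ≤ (v - u) / (1 - u) from div_nonneg (by linarith) (by linarith))
      (show (1 - v) / (1 - u) + (v - u) / (1 - u) = 1 by field_simp; ring)
    simp only [smul_eq_mul] at key
    have harg : (1 - v) / (1 - u) * u + (v - u) / (1 - u) * 1 = v := by
      field_simp; ring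
    rw [harg, hFu, hFv, mul_zero, zero_add] at key
    have : 0 < (v - u) / (1 - u) * F 1 := mul_pos (div_pos (by linarith) h1v) hF1
    linarith
  refine ⟨x₀, ⟨hx₀0, hx₀1⟩, hFx₀, ?_⟩
  intro x hx hFx
  have hFx' : F x = 0 := hFx
  have hx1 : x < 1 := by
    by_contra h
    push_neg at h
    have h1 := hFmono 1 x one_pos h
    have h2 : 0 < F x := lt_of_lt_of_le hF1 h1
    rw [hFx'] at h2
    exact lt_irrefl _ h2
  rcases lt_trichotomy x x₀ with h | h | h
  · exact absurd (huniq x x₀ hx h hx₀1 hFx' hFx₀) (fun h => h)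
  · exact h
  · exact absurd (huniq x₀ x hx₀0 h hx1 hFx₀ hFx') (fun h => h)
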